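/- Under Assumptions S (i.i.d. sampling with E[‖x‖⁴] < ∞ and E[|f(z)|⁴] < ∞), I (Σxx := E[x xᵀ] positive definite), and A (E[(f(z) − xᵀβ*)² ‖x‖²] < ∞), the OLS estimator β̂_n := (XᵀX)⁻¹XᵀF (defined on the event that XᵀX is invertible) converges in probability to the linear projection coefficient β* := Σxx⁻¹ E[x f(z)] as n → ∞. -/

import Mathlib

open MeasureTheory ProbabilityTheory Matrix Filter
open scoped Topology

noncomputable section

/-- Population Gram matrix `Σxx = E[x xᵀ]`. -/
def SigmaXX {Ω : Type*} [MeasurableSpace Ω] (μ : Measure Ω) {p : ℕ}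
    (x : Ω → Fin p → ℝ) : Matrix (Fin p) (Fin p) ℝ :=
  Matrix.of fun a b => ∫ ω, x ω a * x ω b ∂μ

/-- Population linear projection coefficient `β* = Σxx⁻¹ E[x f(z)]`. -/
def betaStar {Ω : Type*} [MeasurableSpace Ω] (μ : Measure Ω) {p q : ℕ}
    (x : Ω → Fin p → ℝ) (z : Ω → Fin q → ℝ) (f : (Fin q → ℝ) → ℝ) : Fin p → ℝ :=
  (SigmaXX μ x)⁻¹ *ᵥ fun a => ∫ ω, x ω a * f (z ω) ∂μ

/-- Sample Gram matrix `XᵀX = ∑ᵢ xᵢ xᵢᵀ` from the first `n` observations. -/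
def gramN {Ω : Type*} {p : ℕ} (X : ℕ → Ω → Fin p → ℝ) (n : ℕ) (ω : Ω) :
    Matrix (Fin p) (Fin p) ℝ :=
  ∑ i ∈ Finset.range n, vecMulVec (X i ω) (X i ω)

/-- OLS estimator `β̂ₙ = (XᵀX)⁻¹ XᵀF`; the matrix inverse is the Mathlib nonsingular
inverse, which returns the junk value `0` outside the event that `XᵀX` is invertible. -/
def olsN {Ω : Type*} {p q : ℕ} (X : ℕ → Ω → Fin p → ℝ) (Z : ℕ → Ω → Fin q → ℝ)
    (f : (Fin q → ℝ) → ℝ) (n : ℕ) (ω : Ω) : Fin p → ℝ :=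
  (gramN X n ω)⁻¹ *ᵥ ∑ i ∈ Finset.range n, f (Z i ω) • X i ω

/-! ### Auxiliary lemmas -/

/-- Scalar multiplication and the nonsingular inverse commute (real square matrices). -/
lemma aux_matrix_smul_inv {p : ℕ} (c : ℝ) (hc : c ≠ 0) (A : Matrix (Fin p) (Fin p) ℝ) :
    (c • A)⁻¹ = c⁻¹ • A⁻¹ := by
  rcases Nat.eq_zero_or_pos p with hp | hp
  · subst hp; ext i j; exact i.elim0
  · rw [Matrix.inv_def, Matrix.inv_def, Matrix.det_smul, Matrix.adjugate_smul,
      Ring.inverse_eq_inv', smul_smul, smul_smul]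
    congr 1
    simp only [Fintype.card_fin]
    have h1 : c ^ p = c ^ (p - 1) * c := by
      rw [← pow_succ]
      congr 1
      omega
    have hcp : c ^ (p - 1) ≠ 0 := pow_ne_zero _ hc
    rcases eq_or_ne A.det 0 with hd | hd
    · simp [hd]
    · field_simp
      rw [h1]

/-- Determinant of a measurable matrix-valued family is measurable (done entrywise,
avoiding any measurable-space instance on `Matrix`). -/
lemma aux_measurable_det {Ω : Type*} [MeasurableSpace Ω] {p : ℕ}
    (g : Ω → Matrix (Fin p) (Fin p) ℝ) (hg : ∀ a b, Measurable fun ω => g ω a b) :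
    Measurable fun ω => (g ω).det := by
  simp only [Matrix.det_apply, Units.smul_def, zsmul_eq_mul]
  exact Finset.measurable_sum _ fun σ _ =>
    (Finset.measurable_prod _ fun i _ => hg _ _).const_mul _

lemma aux_measurable_inv_entry {Ω : Type*} [MeasurableSpace Ω] {p : ℕ}
    (g : Ω → Matrix (Fin p) (Fin p) ℝ) (hg : ∀ a b, Measurable fun ω => g ω a b)
    (a b : Fin p) : Measurable fun ω => (g ω)⁻¹ a b := by
  simp only [Matrix.inv_def, Ring.inverse_eq_inv', Matrix.smul_apply, smul_eq_mul,
    Matrix.adjugate_apply]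
  refine ((aux_measurable_det g hg).inv).mul (aux_measurable_det _ ?_)
  intro a' b'
  rcases eq_or_ne a' b with h | h
  · simpa [Matrix.updateRow_apply, h] using measurable_const
  · simpa [Matrix.updateRow_apply, h] using hg a' b'

/-- Evaluation commutes with the Bochner integral in finite product spaces. -/
lemma aux_integral_pi_apply {Ω : Type*} [MeasurableSpace Ω] {μ : Measure Ω}
    {ι : Type*} [Fintype ι] {E : Type*} [NormedAddCommGroup E] [NormedSpace ℝ E]
    [CompleteSpace E] {g : Ω → ι → E} (hg : Integrable g μ) (a : ι) :
    (∫ ω, g ω ∂μ) a = ∫ ω, g ω a ∂μ := by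
  have := (ContinuousLinearMap.proj (R := ℝ) (φ := fun _ : ι => E) a).integral_comp_comm hg
  simpa using this.symm

/-- OLS consistency. Under Assumption S (i.i.d. sampling with
`E[‖x‖⁴] < ∞`, `E[|f(z)|⁴] < ∞`), Assumption I (`Σxx` positive definite), and
Assumption A (`E[(f(z) − xᵀβ*)² ‖x‖²] < ∞`), the OLS estimator `β̂ₙ` converges in
probability to the linear projection coefficient `β* = Σxx⁻¹ E[x f(z)]`. -/
theorem ols_consistent
    {Ω : Type*} [MeasurableSpace Ω] (μ : Measure Ω) [IsProbabilityMeasure μ]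
    {p q : ℕ} (X : ℕ → Ω → Fin p → ℝ) (Z : ℕ → Ω → Fin q → ℝ)
    (f : (Fin q → ℝ) → ℝ) (hf : Measurable f)
    (hX : ∀ i, Measurable (X i)) (hZ : ∀ i, Measurable (Z i))
    (hiid : iIndepFun (fun i ω => (X i ω, Z i ω)) μ)
    (hident : ∀ i, IdentDistrib (fun ω => (X i ω, Z i ω)) (fun ω => (X 0 ω, Z 0 ω)) μ μ)
    (hS1 : Integrable (fun ω => ‖X 0 ω‖ ^ 4) μ)
    (hS2 : Integrable (fun ω => |f (Z 0 ω)| ^ 4) μ)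
    (hI : (SigmaXX μ (X 0)).PosDef)
    (hA : Integrable (fun ω =>
        (f (Z 0 ω) - X 0 ω ⬝ᵥ betaStar μ (X 0) (Z 0) f) ^ 2 * ‖X 0 ω‖ ^ 2) μ) :
    TendstoInMeasure μ (fun n => olsN X Z f n) atTop
      (fun _ => betaStar μ (X 0) (Z 0) f) := by
  classical
  -- the two families of random vectors to which we apply the strong law
  set W : ℕ → Ω → Fin p → Fin p → ℝ := fun i ω a b => X i ω a * X i ω b with hW_def
  set V : ℕ → Ω → Fin p → ℝ := fun i ω => f (Z i ω) • X i ω with hV_def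
  -- measurability of W i and V i
  have hWmeas : ∀ i, Measurable (W i) := fun i =>
    measurable_pi_lambda _ fun a => measurable_pi_lambda _ fun b =>
      ((measurable_pi_apply a).comp (hX i)).mul ((measurable_pi_apply b).comp (hX i))
  have hVmeas : ∀ i, Measurable (V i) := fun i =>
    measurable_pi_lambda _ fun a =>
      ((hf.comp (hZ i)).mul ((measurable_pi_apply a).comp (hX i)))
  -- integrability
  have hx2 : Integrable (fun ω => ‖X 0 ω‖ ^ 2) μ := by
    refine Integrable.mono' ((integrable_const 1).add hS1)
      ((hX 0).norm.pow_const 2).aestronglyMeasurable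
      (Filter.Eventually.of_forall fun ω => ?_)
    have h0 : (0:ℝ) ≤ ‖X 0 ω‖ := norm_nonneg _
    rw [Real.norm_eq_abs, abs_of_nonneg (by positivity)]
    simp only [Pi.add_apply]
    nlinarith [sq_nonneg (‖X 0 ω‖ ^ 2 - 1)]
  have hWint : Integrable (W 0) μ := by
    refine Integrable.mono' hx2 (hWmeas 0).aestronglyMeasurable
      (Filter.Eventually.of_forall fun ω => ?_)
    refine (pi_norm_le_iff_of_nonneg (by positivity)).2 fun a => ?_
    refine (pi_norm_le_iff_of_nonneg (by positivity)).2 fun b => ?_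
    have ha := norm_le_pi_norm (X 0 ω) a
    have hb := norm_le_pi_norm (X 0 ω) b
    have h0a : (0:ℝ) ≤ ‖X 0 ω a‖ := norm_nonneg _
    have h0b : (0:ℝ) ≤ ‖X 0 ω b‖ := norm_nonneg _
    calc ‖X 0 ω a * X 0 ω b‖ = ‖X 0 ω a‖ * ‖X 0 ω b‖ := norm_mul _ _
      _ ≤ ‖X 0 ω‖ * ‖X 0 ω‖ := by gcongr <;> simp [ha, hb]
      _ = ‖X 0 ω‖ ^ 2 := (sq ‖X 0 ω‖).symm
  have hVint : Integrable (V 0) μ := by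
    refine Integrable.mono' (((integrable_const 1).add hS2).add hS1)
      (hVmeas 0).aestronglyMeasurable (Filter.Eventually.of_forall fun ω => ?_)
    have h1 : ‖V 0 ω‖ = |f (Z 0 ω)| * ‖X 0 ω‖ := by
      rw [hV_def]; simp [norm_smul, Real.norm_eq_abs]
    simp only [Pi.add_apply]
    rw [h1]
    have h0f : (0:ℝ) ≤ |f (Z 0 ω)| := abs_nonneg _
    have h0x : (0:ℝ) ≤ ‖X 0 ω‖ := norm_nonneg _
    nlinarith [sq_nonneg (|f (Z 0 ω)| - ‖X 0 ω‖), sq_nonneg (|f (Z 0 ω)| ^ 2 - 1),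
      sq_nonneg (‖X 0 ω‖ ^ 2 - 1)]
  -- independence and identical distribution
  have hgWmeas : Measurable (fun u : (Fin p → ℝ) × (Fin q → ℝ) => fun a b => u.1 a * u.1 b :
      (Fin p → ℝ) × (Fin q → ℝ) → Fin p → Fin p → ℝ) :=
    measurable_pi_lambda _ fun a => measurable_pi_lambda _ fun b =>
      ((measurable_pi_apply a).comp measurable_fst).mul
        ((measurable_pi_apply b).comp measurable_fst)
  have hgVmeas : Measurable (fun u : (Fin p → ℝ) × (Fin q → ℝ) => f u.2 • u.1 :
      (Fin p → ℝ) × (Fin q → ℝ) → Fin p → ℝ) :=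
    measurable_pi_lambda _ fun a =>
      ((hf.comp measurable_snd).mul ((measurable_pi_apply a).comp measurable_fst))
  have hWindep : Pairwise (Function.onFun (fun x1 x2 => IndepFun x1 x2 μ) W) := fun i j hij =>
    (hiid.indepFun hij).comp hgWmeas hgWmeas
  have hWident : ∀ i, IdentDistrib (W i) (W 0) μ μ := fun i =>
    (hident i).comp hgWmeas
  have hVindep : Pairwise (Function.onFun (fun x1 x2 => IndepFun x1 x2 μ) V) := fun i j hij =>
    (hiid.indepFun hij).comp hgVmeas hgVmeas
  have hVident : ∀ i, IdentDistrib (V i) (V 0) μ μ := fun i =>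
    (hident i).comp hgVmeas
  -- strong laws of large numbers
  have hWlln := strong_law_ae (μ := μ) W hWint hWindep hWident
  have hVlln := strong_law_ae (μ := μ) V hVint hVindep hVident
  -- identify the expectations
  have hEW : (∫ ω, W 0 ω ∂μ) = fun a b => ∫ ω, X 0 ω a * X 0 ω b ∂μ := by
    funext a b
    have h2 : Integrable (fun ω => W 0 ω a) μ :=
      (ContinuousLinearMap.proj (R := ℝ) (φ := fun _ : Fin p => Fin p → ℝ)
        a).integrable_comp hWint
    rw [aux_integral_pi_apply hWint a, aux_integral_pi_apply h2 b]
  have hEV : (∫ ω, V 0 ω ∂μ) = fun a => ∫ ω, X 0 ω a * f (Z 0 ω) ∂μ := by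
    funext a
    rw [aux_integral_pi_apply hVint a]
    have : (fun ω => V 0 ω a) = fun ω => X 0 ω a * f (Z 0 ω) := by
      funext ω; rw [hV_def]; simp [mul_comm]
    rw [this]
  -- nonvanishing determinant and continuity of inversion at the limit
  have hdet0 : (SigmaXX μ (X 0)).det ≠ 0 := ne_of_gt hI.det_pos
  have hcontinv : ContinuousAt Inv.inv (SigmaXX μ (X 0)) := by
    refine continuousAt_matrix_inv _ ?_
    rw [Ring.inverse_eq_inv']
    exact continuousAt_inv₀ hdet0
  -- almost sure convergence of the OLS estimator
  have hae : ∀ᵐ ω ∂μ, Tendsto (fun n => olsN X Z f n ω) atTop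
      (𝓝 (betaStar μ (X 0) (Z 0) f)) := by
    filter_upwards [hWlln, hVlln] with ω hWω hVω
    rw [hEW] at hWω
    rw [hEV] at hVω
    -- the normalized Gram matrices converge to SigmaXX
    have hsum : ∀ n : ℕ, (∑ i ∈ Finset.range n, W i ω) = (gramN X n ω :
        Matrix (Fin p) (Fin p) ℝ) := by
      intro n
      funext a b
      simp only [hW_def, Finset.sum_apply, gramN, Matrix.sum_apply, vecMulVec_apply]
    have hGA : Tendsto (fun n : ℕ => ((n : ℝ)⁻¹ • gramN X n ω : Matrix (Fin p) (Fin p) ℝ))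
        atTop (𝓝 (SigmaXX μ (X 0))) := by
      have : (fun n : ℕ => ((n : ℝ)⁻¹ • gramN X n ω : Matrix (Fin p) (Fin p) ℝ)) =
          fun n : ℕ => (n : ℝ)⁻¹ • ∑ i ∈ Finset.range n, W i ω := by
        funext n; rw [hsum n]; rfl
      rw [this]
      exact hWω
    have hInv : Tendsto (fun n : ℕ => ((n : ℝ)⁻¹ • gramN X n ω :
        Matrix (Fin p) (Fin p) ℝ)⁻¹) atTop (𝓝 (SigmaXX μ (X 0))⁻¹) :=
      hcontinv.tendsto.comp hGA
    have hv : Tendsto (fun n : ℕ => (n : ℝ)⁻¹ • ∑ i ∈ Finset.range n, f (Z i ω) • X i ω)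
        atTop (𝓝 fun a => ∫ ω', X 0 ω' a * f (Z 0 ω') ∂μ) := hVω
    have hc : Continuous (fun P : Matrix (Fin p) (Fin p) ℝ × (Fin p → ℝ) => P.1 *ᵥ P.2) :=
      Continuous.matrix_mulVec continuous_fst continuous_snd
    have hmv : Tendsto (fun n : ℕ =>
        ((n : ℝ)⁻¹ • gramN X n ω : Matrix (Fin p) (Fin p) ℝ)⁻¹ *ᵥ
          ((n : ℝ)⁻¹ • ∑ i ∈ Finset.range n, f (Z i ω) • X i ω)) atTop
        (𝓝 ((SigmaXX μ (X 0))⁻¹ *ᵥ fun a => ∫ ω', X 0 ω' a * f (Z 0 ω') ∂μ)) :=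
      (hc.tendsto _).comp (hInv.prodMk_nhds hv)
    refine (hmv.congr' ?_)
    filter_upwards [eventually_ge_atTop 1] with n hn
    have hn0 : ((n : ℝ)) ≠ 0 := Nat.cast_ne_zero.2 (by omega)
    rw [aux_matrix_smul_inv _ (inv_ne_zero hn0), inv_inv, smul_mulVec,
      mulVec_smul, smul_smul, mul_inv_cancel₀ hn0, one_smul]
    rfl
  -- measurability of the OLS estimators
  have hgram : ∀ n a b, Measurable fun ω => gramN X n ω a b := by
    intro n a b
    simp only [gramN, Matrix.sum_apply, vecMulVec_apply]
    exact Finset.measurable_sum _ fun i _ =>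
      ((measurable_pi_apply a).comp (hX i)).mul ((measurable_pi_apply b).comp (hX i))
  have holsmeas : ∀ n, Measurable (olsN X Z f n) := by
    intro n
    refine measurable_pi_lambda _ fun c => ?_
    have : (fun ω => olsN X Z f n ω c) =
        fun ω => ∑ b, (gramN X n ω)⁻¹ c b * ∑ i ∈ Finset.range n, f (Z i ω) * X i ω b := by
      funext ω
      simp only [olsN, Matrix.mulVec, dotProduct, Finset.sum_apply, Pi.smul_apply,
        smul_eq_mul]
    rw [this]
    exact Finset.measurable_sum _ fun b _ =>
      (aux_measurable_inv_entry _ (hgram n) c b).mul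
        (Finset.measurable_sum _ fun i _ =>
          (hf.comp (hZ i)).mul ((measurable_pi_apply b).comp (hX i)))
  exact tendstoInMeasure_of_tendsto_ae (fun n => (holsmeas n).aestronglyMeasurable) hae
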